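/- arXiv:1612.06040 — 5 statements merged into one kernel-verified Lean document; each statement's English description precedes it below -/
import Mathlib

section
/- Every integer point of the rectangle ∏_{i<j}[0, n_i·n_j] × ∏_i [0, C(n_i,2)] in Z^{C(k+1,2)} is realized as the ER-SBM sufficient statistic vector T(g) of some simple graph g on [n] with blocks B_1,...,B_k. In particular, the convex hull of {T(g) : g a simple graph on [n]} equals this rectangle. -/
/-- Number of nodes assigned to block `i`. -/
noncomputable def blockSize {n k : ℕ} (z : Fin n → Fin k) (i : Fin k) : ℕ := {v | z v = i}.ncard

/-- ER-SBM sufficient statistic: number of edges of `g` whose pair of endpoint blocks is `p`. -/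
noncomputable def blockStat {n k : ℕ} (z : Fin n → Fin k) (g : SimpleGraph (Fin n)) (p : Sym2 (Fin k)) : ℕ :=
  {e ∈ g.edgeSet | Sym2.map z e = p}.ncard

/-- Set of potential edges (non-diagonal pairs) whose block pair is `p`. -/
def blockPairs {n k : ℕ} (z : Fin n → Fin k) (p : Sym2 (Fin k)) : Set (Sym2 (Fin n)) :=
  {e | ¬ e.IsDiag ∧ Sym2.map z e = p}

lemma blockPairs_card_off {n k : ℕ} (z : Fin n → Fin k) {i j : Fin k} (hij : i ≠ j) :
    (blockPairs z s(i, j)).ncard = blockSize z i * blockSize z j := by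
  have himg : blockPairs z s(i, j)
      = (fun q : Fin n × Fin n => s(q.1, q.2)) '' ({v | z v = i} ×ˢ {v | z v = j}) := by
    ext e
    constructor
    · rintro ⟨hd, hm⟩
      induction e using Sym2.ind with
      | _ u v =>
        rw [Sym2.map_pair_eq, Sym2.eq_iff] at hm
        rcases hm with ⟨h1, h2⟩ | ⟨h1, h2⟩
        · exact ⟨(u, v), ⟨h1, h2⟩, rfl⟩
        · exact ⟨(v, u), ⟨h2, h1⟩, Sym2.eq_swap⟩
    · rintro ⟨⟨u, v⟩, huv, rfl⟩
      simp only [Set.mem_prod, Set.mem_setOf_eq] at huv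
      obtain ⟨h1, h2⟩ := huv
      refine ⟨?_, by simp [Sym2.map_pair_eq, h1, h2]⟩
      rw [Sym2.mk_isDiag_iff]
      intro h
      apply hij
      rw [← h1, ← h2]
      exact congrArg z h
  have hinj : Set.InjOn (fun q : Fin n × Fin n => s(q.1, q.2)) ({v | z v = i} ×ˢ {v | z v = j}) := by
    rintro ⟨u, v⟩ huv ⟨u', v'⟩ huv' h
    simp only [Set.mem_prod, Set.mem_setOf_eq] at huv huv'
    obtain ⟨hu, hv⟩ := huv
    obtain ⟨hu', hv'⟩ := huv'
    simp only [Sym2.eq_iff] at h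
    rcases h with ⟨rfl, rfl⟩ | ⟨rfl, rfl⟩
    · rfl
    · exact absurd (hu ▸ hv' ▸ rfl) hij
  rw [himg, Set.ncard_image_of_injOn hinj]
  simp [Set.ncard_eq_toFinset_card', blockSize]

lemma blockPairs_card_diag {n k : ℕ} (z : Fin n → Fin k) (i : Fin k) :
    (blockPairs z s(i, i)).ncard = (blockSize z i).choose 2 := by
  have himg : blockPairs z s(i, i)
      = Sym2.map (Subtype.val : {v : Fin n // z v = i} → Fin n) '' {e | ¬ e.IsDiag} := by
    ext e
    constructor
    · rintro ⟨hd, hm⟩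
      induction e using Sym2.ind with
      | _ u v =>
        rw [Sym2.map_pair_eq, Sym2.eq_iff] at hm
        have hu : z u = i := by tauto
        have hv : z v = i := by tauto
        refine ⟨s(⟨u, hu⟩, ⟨v, hv⟩), ?_, by simp [Sym2.map_pair_eq]⟩
        rw [Set.mem_setOf_eq, Sym2.mk_isDiag_iff] at *
        intro h; exact hd (congrArg Subtype.val h)
    · rintro ⟨e', hd, rfl⟩
      induction e' using Sym2.ind with
      | _ a b =>
        rw [Set.mem_setOf_eq, Sym2.mk_isDiag_iff] at hd
        constructor
        · rw [Sym2.map_pair_eq, Sym2.mk_isDiag_iff]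
          intro h; exact hd (Subtype.ext h)
        · simp [Sym2.map_pair_eq, a.2, b.2]
  rw [himg, Set.ncard_image_of_injOn ((Sym2.map.injective Subtype.val_injective).injOn)]
  have h1 : {e : Sym2 {v : Fin n // z v = i} | ¬ e.IsDiag}.ncard
      = Fintype.card {e : Sym2 {v : Fin n // z v = i} // ¬ e.IsDiag} := by
    rw [← Nat.card_coe_set_eq, Nat.card_eq_fintype_card]
    exact Fintype.card_congr (Equiv.refl _)
  rw [h1, Sym2.card_subtype_not_diag]
  congr 1
  rw [blockSize, ← Nat.card_coe_set_eq, Nat.card_eq_fintype_card]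
  rfl

lemma blockStat_subset {n k : ℕ} (z : Fin n → Fin k) (g : SimpleGraph (Fin n)) (p : Sym2 (Fin k)) :
    {e ∈ g.edgeSet | Sym2.map z e = p} ⊆ blockPairs z p :=
  fun _ he => ⟨g.not_isDiag_of_mem_edgeSet he.1, he.2⟩


theorem stmt1 {n k : ℕ} (z : Fin n → Fin k) (hz : ∀ i, 0 < blockSize z i) :
    (∀ a : Sym2 (Fin k) → ℕ,
      (∀ i j : Fin k, i ≠ j → a s(i, j) ≤ blockSize z i * blockSize z j) →
      (∀ i : Fin k, a s(i, i) ≤ (blockSize z i).choose 2) →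
      ∃ g : SimpleGraph (Fin n), ∀ p, blockStat z g p = a p) ∧
    convexHull ℝ
        {x : Sym2 (Fin k) → ℝ | ∃ g : SimpleGraph (Fin n), ∀ p, x p = (blockStat z g p : ℝ)} =
      {x : Sym2 (Fin k) → ℝ |
        (∀ i j : Fin k, i ≠ j →
          0 ≤ x s(i, j) ∧ x s(i, j) ≤ (blockSize z i * blockSize z j : ℕ)) ∧
        (∀ i : Fin k, 0 ≤ x s(i, i) ∧ x s(i, i) ≤ ((blockSize z i).choose 2 : ℕ))} := by
  classical
  have part1 : ∀ a : Sym2 (Fin k) → ℕ,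
      (∀ i j : Fin k, i ≠ j → a s(i, j) ≤ blockSize z i * blockSize z j) →
      (∀ i : Fin k, a s(i, i) ≤ (blockSize z i).choose 2) →
      ∃ g : SimpleGraph (Fin n), ∀ p, blockStat z g p = a p := by
    intro a h1 h2
    have ha : ∀ p, a p ≤ (blockPairs z p).ncard := by
      intro p
      induction p using Sym2.ind with
      | _ i j =>
        by_cases hij : i = j
        · subst hij; rw [blockPairs_card_diag]; exact h2 i
        · rw [blockPairs_card_off z hij]; exact h1 i j hij
    choose S hSsub hScard using fun p => Set.exists_subset_card_eq (ha p)
    refine ⟨SimpleGraph.fromEdgeSet (⋃ p, S p), fun p => ?_⟩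
    have hset : {e ∈ (SimpleGraph.fromEdgeSet (⋃ p, S p)).edgeSet | Sym2.map z e = p} = S p := by
      ext e
      simp only [SimpleGraph.edgeSet_fromEdgeSet, Set.mem_setOf_eq, Set.mem_diff,
        Set.mem_iUnion]
      constructor
      · rintro ⟨⟨⟨q, hq⟩, _⟩, hm⟩
        obtain ⟨_, hm'⟩ := hSsub q hq
        have hqp : q = p := hm'.symm.trans hm
        exact hqp ▸ hq
      · intro he
        obtain ⟨hd, hm⟩ := hSsub p he
        exact ⟨⟨⟨p, he⟩, hd⟩, hm⟩
    rw [blockStat, hset, hScard]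
  refine ⟨part1, ?_⟩
  have hbox : {x : Sym2 (Fin k) → ℝ |
        (∀ i j : Fin k, i ≠ j →
          0 ≤ x s(i, j) ∧ x s(i, j) ≤ (blockSize z i * blockSize z j : ℕ)) ∧
        (∀ i : Fin k, 0 ≤ x s(i, i) ∧ x s(i, i) ≤ ((blockSize z i).choose 2 : ℕ))}
      = Set.univ.pi (fun p => Set.Icc (0 : ℝ) ((blockPairs z p).ncard : ℝ)) := by
    ext x
    simp only [Set.mem_setOf_eq, Set.mem_pi, Set.mem_univ, Set.mem_Icc, forall_const]
    constructor
    · rintro ⟨h1, h2⟩ p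
      induction p using Sym2.ind with
      | _ i j =>
        by_cases hij : i = j
        · subst hij; rw [blockPairs_card_diag]; exact h2 i
        · rw [blockPairs_card_off z hij]
          exact_mod_cast h1 i j hij
    · intro h
      constructor
      · intro i j hij
        have := h s(i, j)
        rw [blockPairs_card_off z hij] at this
        exact_mod_cast this
      · intro i
        have := h s(i, i)
        rw [blockPairs_card_diag] at this
        exact_mod_cast this
  rw [hbox]
  apply Set.Subset.antisymm
  · refine convexHull_min ?_ (convex_pi fun p _ => convex_Icc _ _)
    rintro x ⟨g, hg⟩
    refine Set.mem_pi.2 fun p _ => ⟨by rw [hg]; positivity, ?_⟩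
    rw [hg]
    exact_mod_cast Set.ncard_le_ncard (blockStat_subset z g p) (Set.toFinite _)
  · have hpi : Set.univ.pi (fun p => Set.Icc (0 : ℝ) ((blockPairs z p).ncard : ℝ))
        = convexHull ℝ (Set.univ.pi fun p => ({0, ((blockPairs z p).ncard : ℝ)} : Set ℝ)) := by
      rw [convexHull_pi]
      refine congrArg _ (funext fun p => ?_)
      rw [convexHull_pair, segment_eq_Icc (by positivity)]
    rw [hpi]
    apply convexHull_mono
    intro x hx
    set a : Sym2 (Fin k) → ℕ := fun p => if x p = 0 then 0 else (blockPairs z p).ncard with ha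
    obtain ⟨g, hg⟩ := part1 a
      (by
        intro i j hij
        simp only [a]
        split
        · exact Nat.zero_le _
        · exact (blockPairs_card_off z hij).le)
      (by
        intro i
        simp only [a]
        split
        · exact Nat.zero_le _
        · exact (blockPairs_card_diag z i).le)
    refine ⟨g, fun p => ?_⟩
    rw [hg p]
    by_cases h0 : x p = 0
    · simp [a, h0]
    · rcases hx p (Set.mem_univ p) with h | h
      · exact absurd h h0
      · simp only [Set.mem_singleton_iff] at h
        simp only [a, if_neg h0]
        exact h
end

section
/- Two simple graphs g and h on [n] have the same ER-SBM sufficient statistics (the same number of edges between each pair of blocks and within each block) if and only if g can be transformed into h by a finite sequence of single-edge swaps, where each swap removes an edge {u,v} and adds an edge {y,w} with z(u)=z(y) and z(v)=z(w) (i.e., the two edges connect the same pair of blocks), and each intermediate graph is simple. -/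
/-- A single-edge swap: remove an edge `{u,v}` and add a (currently absent) edge `{y,w}`
connecting the same pair of blocks. -/
def swapStep {n k : ℕ} (z : Fin n → Fin k) (g h : SimpleGraph (Fin n)) : Prop :=
  ∃ u v y w : Fin n, g.Adj u v ∧ ¬ g.Adj y w ∧ y ≠ w ∧ z u = z y ∧ z v = z w ∧
    h = SimpleGraph.fromEdgeSet ((g.edgeSet \ {s(u, v)}) ∪ {s(y, w)})

lemma swap_edgeSet {n : ℕ} {g : SimpleGraph (Fin n)} {u v y w : Fin n}
    (hyw : y ≠ w) :
    (SimpleGraph.fromEdgeSet ((g.edgeSet \ {s(u,v)}) ∪ {s(y,w)})).edgeSet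
      = (g.edgeSet \ {s(u,v)}) ∪ {s(y,w)} := by
  rw [SimpleGraph.edgeSet_fromEdgeSet]
  ext e
  simp only [Set.mem_diff, Set.mem_union, Set.mem_singleton_iff, Set.mem_setOf_eq]
  constructor
  · tauto
  · rintro (⟨hg, hne⟩ | rfl)
    · exact ⟨Or.inl ⟨hg, hne⟩, SimpleGraph.not_isDiag_of_mem_edgeSet g hg⟩
    · exact ⟨Or.inr rfl, by simpa using hyw⟩

lemma swap_blockStat {n k : ℕ} (z : Fin n → Fin k) {g h : SimpleGraph (Fin n)}
    (hs : swapStep z g h) : ∀ p, blockStat z g p = blockStat z h p := by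
  obtain ⟨u, v, y, w, huv, hnyw, hyw, hzu, hzv, rfl⟩ := hs
  intro p
  unfold blockStat
  rw [swap_edgeSet hyw]
  have hmapb : Sym2.map z s(y,w) = s(z u, z v) := by
    simp [Sym2.map_pair_eq, hzu, hzv]
  have hmapa : Sym2.map z s(u,v) = s(z u, z v) := by
    simp [Sym2.map_pair_eq]
  by_cases hp : p = s(z u, z v)
  · subst hp
    have hset : {e ∈ (g.edgeSet \ {s(u,v)}) ∪ {s(y,w)} | Sym2.map z e = s(z u, z v)}
        = ({e ∈ g.edgeSet | Sym2.map z e = s(z u, z v)} \ {s(u,v)}) ∪ {s(y,w)} := by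
      ext e
      simp only [Set.mem_setOf_eq, Set.mem_diff, Set.mem_union, Set.mem_singleton_iff]
      constructor
      · rintro ⟨(⟨hg, hne⟩ | rfl), hm⟩
        · exact Or.inl ⟨⟨hg, hm⟩, hne⟩
        · exact Or.inr rfl
      · rintro (⟨⟨hg, hm⟩, hne⟩ | rfl)
        · exact ⟨Or.inl ⟨hg, hne⟩, hm⟩
        · exact ⟨Or.inr rfl, hmapb⟩
    rw [hset]
    have ha : s(u,v) ∈ {e ∈ g.edgeSet | Sym2.map z e = s(z u, z v)} := ⟨huv, hmapa⟩
    have hb : s(y,w) ∉ ({e ∈ g.edgeSet | Sym2.map z e = s(z u, z v)} \ {s(u,v)}) := by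
      rintro ⟨⟨hg, -⟩, -⟩
      exact hnyw hg
    rw [Set.union_singleton, Set.ncard_insert_of_notMem hb (Set.toFinite _),
      Set.ncard_diff_singleton_add_one ha (Set.toFinite _)]
  · have hset : {e ∈ (g.edgeSet \ {s(u,v)}) ∪ {s(y,w)} | Sym2.map z e = p}
        = {e ∈ g.edgeSet | Sym2.map z e = p} := by
      ext e
      simp only [Set.mem_setOf_eq, Set.mem_diff, Set.mem_union, Set.mem_singleton_iff]
      constructor
      · rintro ⟨(⟨hg, -⟩ | rfl), hm⟩
        · exact ⟨hg, hm⟩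
        · exact absurd (hmapb ▸ hm) (fun h => hp h.symm)
      · rintro ⟨hg, hm⟩
        refine ⟨Or.inl ⟨hg, ?_⟩, hm⟩
        rintro rfl
        exact hp (hmapa ▸ hm).symm
    rw [hset]

lemma forward_aux {n k : ℕ} (z : Fin n → Fin k) :
    ∀ m : ℕ, ∀ g h : SimpleGraph (Fin n), (g.edgeSet \ h.edgeSet).ncard = m →
      (∀ p, blockStat z g p = blockStat z h p) →
      Relation.ReflTransGen (swapStep z) g h := by
  intro m
  induction m using Nat.strong_induction_on with
  | _ m IH =>
  intro g h hm hstat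
  by_cases hgh : g.edgeSet \ h.edgeSet = ∅
  · -- edge sets equal, so g = h
    have hsub : g.edgeSet ⊆ h.edgeSet := Set.diff_eq_empty.mp hgh
    have hsets : ∀ p, {e ∈ g.edgeSet | Sym2.map z e = p} = {e ∈ h.edgeSet | Sym2.map z e = p} := by
      intro p
      apply Set.eq_of_subset_of_ncard_le
      · rintro e ⟨hg, hmp⟩; exact ⟨hsub hg, hmp⟩
      · exact (hstat p).ge
      · exact Set.toFinite _
    have : g.edgeSet = h.edgeSet := by
      apply Set.Subset.antisymm hsub
      intro e he
      have : e ∈ {e' ∈ g.edgeSet | Sym2.map z e' = Sym2.map z e} := by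
        rw [hsets (Sym2.map z e)]; exact ⟨he, rfl⟩
      exact this.1
    rw [SimpleGraph.edgeSet_inj] at this
    subst this
    exact Relation.ReflTransGen.refl
  · obtain ⟨u, v, hgA, hnhA⟩ := Sym2.exists.mp (Set.nonempty_iff_ne_empty.mpr hgh)
    have huv : g.Adj u v := hgA
    -- counting: find e' in h but not in g with same block pair
    set A := {e ∈ g.edgeSet | Sym2.map z e = s(z u, z v)} with hA
    set B := {e ∈ h.edgeSet | Sym2.map z e = s(z u, z v)} with hB
    have haA : s(u,v) ∈ A := ⟨hgA, by simp [Sym2.map_pair_eq]⟩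
    have haB : s(u,v) ∉ B := fun hc => hnhA hc.1
    have hBA : ∃ e', e' ∈ B ∧ e' ∉ A := by
      by_contra hc
      push_neg at hc
      have hcards : A.ncard = B.ncard := hstat s(z u, z v)
      have hEq : B = A := Set.eq_of_subset_of_ncard_le hc hcards.le (Set.toFinite _)
      exact haB (hEq ▸ haA)
    obtain ⟨y, w, he'B, he'A⟩ := Sym2.exists.mp hBA
    have hywh : h.Adj y w := he'B.1
    have hyw : y ≠ w := hywh.ne
    have hywg : s(y,w) ∉ g.edgeSet := fun hc => he'A ⟨hc, he'B.2⟩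
    have hmap : s(z y, z w) = s(z u, z v) := by
      have := he'B.2; simpa [Sym2.map_pair_eq] using this
    -- swap step
    set g' := SimpleGraph.fromEdgeSet ((g.edgeSet \ {s(u,v)}) ∪ {s(y,w)}) with hg'
    have hstep : swapStep z g g' := by
      rw [Sym2.eq_iff] at hmap
      rcases hmap with ⟨h1, h2⟩ | ⟨h1, h2⟩
      · exact ⟨u, v, y, w, huv, fun hc => hywg hc, hyw, h1.symm, h2.symm, rfl⟩
      · refine ⟨u, v, w, y, huv, fun hc => hywg (Sym2.eq_swap ▸ hc), hyw.symm,
          h2.symm, h1.symm, ?_⟩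
        rw [hg']
        have hsw : s(w, y) = s(y, w) := Sym2.eq_swap
        rw [hsw]
    have hg'e : g'.edgeSet = (g.edgeSet \ {s(u,v)}) ∪ {s(y,w)} := swap_edgeSet hyw
    have hdiff : g'.edgeSet \ h.edgeSet = (g.edgeSet \ h.edgeSet) \ {s(u,v)} := by
      rw [hg'e]
      ext x
      simp only [Set.mem_diff, Set.mem_union, Set.mem_singleton_iff]
      constructor
      · rintro ⟨(⟨hg, hne⟩ | rfl), hnh⟩
        · exact ⟨⟨hg, hnh⟩, hne⟩
        · exact absurd hywh hnh
      · rintro ⟨⟨hg, hnh⟩, hne⟩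
        exact ⟨Or.inl ⟨hg, hne⟩, hnh⟩
    have hmpos : 0 < m := by
      rw [← hm]
      refine (Set.ncard_pos (Set.toFinite _)).mpr ?_
      exact ⟨s(u,v), hgA, hnhA⟩
    have hcard : (g'.edgeSet \ h.edgeSet).ncard = m - 1 := by
      have hmem : s(u,v) ∈ g.edgeSet \ h.edgeSet := ⟨hgA, hnhA⟩
      rw [hdiff, Set.ncard_diff_singleton_of_mem hmem, hm]
    have hstat' : ∀ p, blockStat z g' p = blockStat z h p := fun p =>
      (swap_blockStat z hstep p).symm.trans (hstat p)
    exact Relation.ReflTransGen.head hstep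
      (IH (m - 1) (Nat.sub_lt hmpos one_pos) g' h hcard hstat')

theorem stmt3 {n k : ℕ} (z : Fin n → Fin k) (g h : SimpleGraph (Fin n)) :
    (∀ p, blockStat z g p = blockStat z h p) ↔
      Relation.ReflTransGen (swapStep z) g h := by
  constructor
  · intro hstat
    exact forward_aux z _ g h rfl hstat
  · intro hrel
    induction hrel with
    | refl => intro p; rfl
    | tail hab hbc ih => exact fun p => (ih p).trans (swap_blockStat z hbc p)
end

section
/- The toric ideal of the ER-SBM, i.e., the kernel of the ring homomorphism φ: K[x_{uv} : 1≤u<v≤n] → K[t_{ij} : 1≤i≤j≤k] sending x_{uv} ↦ t_{z(u)z(v)}, is generated by the linear binomials x_{uv} − x_{yw} where {z(u),z(v)} = {z(y),z(w)}, and these linear binomials form the Graver basis of this ideal. -/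
open MvPolynomial

/-- Index type of the variables `x_{uv}`, `u ≠ v`: non-diagonal unordered pairs of nodes. -/
def EdgeVar (n : ℕ) : Type := {e : Sym2 (Fin n) // ¬ e.IsDiag}

/-- The ER-SBM monomial map `x_{uv} ↦ t_{z(u)z(v)}`. -/
noncomputable def phiER {n k : ℕ} (K : Type*) [Field K] (z : Fin n → Fin k) :
    MvPolynomial (EdgeVar n) K →ₐ[K] MvPolynomial (Sym2 (Fin k)) K :=
  MvPolynomial.aeval (fun e => X (Sym2.map z e.1))

/-- The binomial `x^a - x^b`. -/
noncomputable def binom {n : ℕ} (K : Type*) [Field K] (a b : EdgeVar n →₀ ℕ) :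
    MvPolynomial (EdgeVar n) K :=
  monomial a 1 - monomial b 1

/-- `x^a - x^b` is a primitive binomial of the toric ideal: it is a nonzero element of the
kernel and no other nonzero binomial of the kernel divides it componentwise. -/
def Primitive {n k : ℕ} (K : Type*) [Field K] (z : Fin n → Fin k)
    (a b : EdgeVar n →₀ ℕ) : Prop :=
  a ≠ b ∧ binom K a b ∈ RingHom.ker (phiER K z).toRingHom ∧
    ∀ c d : EdgeVar n →₀ ℕ, c ≠ d → binom K c d ∈ RingHom.ker (phiER K z).toRingHom →
      c ≤ a → d ≤ b → c = a ∧ d = b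


open MvPolynomial Finsupp
open scoped Classical

section Aux
variable {σ τ K : Type*} [Field K]

lemma sub_rename_mem (g : σ → τ) (r : σ → σ) (hr : ∀ a, g (r a) = g a)
    (p : MvPolynomial σ K) :
    p - rename r p ∈ Ideal.span {f : MvPolynomial σ K | ∃ a b, g a = g b ∧ f = X a - X b} := by
  induction p using MvPolynomial.induction_on with
  | C a => simp
  | add p q hp hq =>
      rw [map_add]
      have := Ideal.add_mem _ hp hq
      convert this using 1; ring
  | mul_X p a hp =>
      have h1 : (X a - X (r a) : MvPolynomial σ K) ∈
          Ideal.span {f : MvPolynomial σ K | ∃ a b, g a = g b ∧ f = X a - X b} :=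
        Ideal.subset_span ⟨a, r a, (hr a).symm, rfl⟩
      have : p * X a - rename r (p * X a)
          = (p - rename r p) * X a + rename r p * (X a - X (r a)) := by
        rw [map_mul, rename_X]; ring
      rw [this]
      exact Ideal.add_mem _ (Ideal.mul_mem_right _ _ hp) (Ideal.mul_mem_left _ _ h1)

lemma ker_rename_eq (g : σ → τ) :
    RingHom.ker (rename (R := K) g).toRingHom =
      Ideal.span {f : MvPolynomial σ K | ∃ a b, g a = g b ∧ f = X a - X b} := by
  apply le_antisymm
  · intro p hp
    rw [RingHom.mem_ker] at hp
    by_cases hσ : Nonempty σ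
    · have hr : ∀ a, g (Function.invFun g (g a)) = g a :=
        fun a => Function.invFun_eq ⟨a, rfl⟩
      have h0 : rename (Function.invFun g ∘ g) p = 0 := by
        rw [← rename_rename, show rename g p = 0 from hp, map_zero]
      have := sub_rename_mem g (Function.invFun g ∘ g) hr p
      rwa [h0, sub_zero] at this
    · have hg : Function.Injective g := fun a _ _ => absurd ⟨a⟩ hσ
      have : p = 0 := rename_injective g hg (by simpa using hp)
      simp [this]
  · rw [Ideal.span_le]
    rintro f ⟨a, b, hab, rfl⟩
    simp [SetLike.mem_coe, RingHom.mem_ker, hab]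

lemma binom_mem_ker_iff (g : σ → τ) (a b : σ →₀ ℕ) :
    (monomial a (1:K) - monomial b 1) ∈ RingHom.ker (rename (R := K) g).toRingHom ↔
      a.mapDomain g = b.mapDomain g := by
  rw [RingHom.mem_ker, AlgHom.toRingHom_eq_coe, RingHom.coe_coe, map_sub,
    rename_monomial, rename_monomial, sub_eq_zero, monomial_eq_monomial_iff]
  simp [(one_ne_zero : (1:K) ≠ 0)]

lemma mapDomain_apply_sum (g : σ → τ) (a : σ →₀ ℕ) (s : Finset σ) (hs : a.support ⊆ s) (t : τ) :
    a.mapDomain g t = ∑ x ∈ s, if g x = t then a x else 0 := by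
  classical
  rw [Finsupp.mapDomain, Finsupp.sum_apply]
  rw [Finsupp.sum]
  rw [Finset.sum_subset hs (fun x _ hx => by
    rw [Finsupp.notMem_support_iff] at hx; simp [hx])]
  exact Finset.sum_congr rfl fun x _ => by rw [Finsupp.single_apply]

lemma exists_swap' (g : σ → τ) {a b : σ →₀ ℕ} (h : a.mapDomain g = b.mapDomain g)
    {e : σ} (he : b e < a e) : ∃ e', g e' = g e ∧ a e' < b e' := by
  classical
  by_contra hc
  push_neg at hc
  have hsum : ∑ x ∈ a.support ∪ b.support, (if g x = g e then a x else 0)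
      = ∑ x ∈ a.support ∪ b.support, (if g x = g e then b x else 0) := by
    rw [← mapDomain_apply_sum g a _ Finset.subset_union_left,
      ← mapDomain_apply_sum g b _ Finset.subset_union_right, h]
  have hlt : ∑ x ∈ a.support ∪ b.support, (if g x = g e then b x else 0)
      < ∑ x ∈ a.support ∪ b.support, (if g x = g e then a x else 0) := by
    apply Finset.sum_lt_sum
    · intro i _
      split_ifs with hgi
      · exact hc i hgi
      · exact le_rfl
    · refine ⟨e, Finset.mem_union_left _ ?_, by simpa using he⟩
      rw [Finsupp.mem_support_iff]
      omega
  omega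

lemma le_single_one {c : σ →₀ ℕ} {e : σ} (h : c ≤ Finsupp.single e 1) :
    c = 0 ∨ c = Finsupp.single e 1 := by
  classical
  rw [Finsupp.le_def] at h
  by_cases he : c e = 0
  · left
    ext i
    have hi := h i
    rw [Finsupp.single_apply] at hi
    by_cases hie : e = i
    · subst hie; simpa using he
    · rw [if_neg hie] at hi; simpa using hi
  · right
    ext i
    have hi := h i
    rw [Finsupp.single_apply] at hi ⊢
    by_cases hie : e = i
    · subst hie; rw [if_pos rfl] at hi ⊢; omega
    · rw [if_neg hie] at hi ⊢; omega

end Aux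

theorem stmt4 {n k : ℕ} (K : Type*) [Field K] (z : Fin n → Fin k) :
    RingHom.ker (phiER K z).toRingHom =
      Ideal.span {f : MvPolynomial (EdgeVar n) K |
        ∃ e e' : EdgeVar n, Sym2.map z e.1 = Sym2.map z e'.1 ∧ f = X e - X e'} ∧
    {f : MvPolynomial (EdgeVar n) K | ∃ a b, Primitive K z a b ∧ f = binom K a b} =
      {f : MvPolynomial (EdgeVar n) K |
        ∃ e e' : EdgeVar n, e ≠ e' ∧ Sym2.map z e.1 = Sym2.map z e'.1 ∧ f = X e - X e'} := by
  set g : EdgeVar n → Sym2 (Fin k) := fun e => Sym2.map z e.1 with hg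
  have hphi : phiER K z = rename g :=
    MvPolynomial.algHom_ext (fun i => by simp [phiER, hg])
  have hker : ∀ a b : EdgeVar n →₀ ℕ,
      (binom K a b ∈ RingHom.ker (phiER K z).toRingHom ↔ a.mapDomain g = b.mapDomain g) := by
    intro a b
    rw [hphi]
    exact binom_mem_ker_iff g a b
  constructor
  · rw [hphi, ker_rename_eq g]
  · ext f
    simp only [Set.mem_setOf_eq]
    constructor
    · rintro ⟨a, b, ⟨hab, hk, hmin⟩, rfl⟩
      have hmap : a.mapDomain g = b.mapDomain g := (hker a b).mp hk
      obtain ⟨e, he⟩ := Finsupp.ne_iff.mp hab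
      rcases lt_or_gt_of_ne he with he | he
      · -- a e < b e
        obtain ⟨e', hge, hlt⟩ := exists_swap' g hmap.symm he
        have hne : e' ≠ e := fun h => by rw [h] at hlt; omega
        have hcd : Finsupp.single e' 1 ≠ Finsupp.single e (1 : ℕ) :=
          fun h => hne ((Finsupp.single_left_inj one_ne_zero).mp h)
        have hkcd : binom K (Finsupp.single e' 1) (Finsupp.single e 1) ∈
            RingHom.ker (phiER K z).toRingHom := by
          rw [hker, Finsupp.mapDomain_single, Finsupp.mapDomain_single, hge]
        have hca : Finsupp.single e' 1 ≤ a := Finsupp.single_le_iff.mpr (by omega)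
        have hdb : Finsupp.single e 1 ≤ b := Finsupp.single_le_iff.mpr (by omega)
        obtain ⟨hc, hd⟩ := hmin _ _ hcd hkcd hca hdb
        exact ⟨e', e, hne, hge, by rw [← hc, ← hd]; rfl⟩
      · -- b e < a e
        obtain ⟨e', hge, hlt⟩ := exists_swap' g hmap he
        have hne : e ≠ e' := fun h => by rw [h] at he; omega
        have hcd : Finsupp.single e 1 ≠ Finsupp.single e' (1 : ℕ) :=
          fun h => hne ((Finsupp.single_left_inj one_ne_zero).mp h)
        have hkcd : binom K (Finsupp.single e 1) (Finsupp.single e' 1) ∈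
            RingHom.ker (phiER K z).toRingHom := by
          rw [hker, Finsupp.mapDomain_single, Finsupp.mapDomain_single, hge]
        have hca : Finsupp.single e 1 ≤ a := Finsupp.single_le_iff.mpr (by omega)
        have hdb : Finsupp.single e' 1 ≤ b := Finsupp.single_le_iff.mpr (by omega)
        obtain ⟨hc, hd⟩ := hmin _ _ hcd hkcd hca hdb
        exact ⟨e, e', hne, hge.symm, by rw [← hc, ← hd]; rfl⟩
    · rintro ⟨e, e', hne, hge, rfl⟩
      refine ⟨Finsupp.single e 1, Finsupp.single e' 1, ⟨?_, ?_, ?_⟩, rfl⟩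
      · exact fun h => hne ((Finsupp.single_left_inj one_ne_zero).mp h)
      · rw [hker, Finsupp.mapDomain_single, Finsupp.mapDomain_single]
        exact congrArg (fun t => Finsupp.single t 1) hge
      · intro c d hcd hk hca hdb
        have hm : c.mapDomain g = d.mapDomain g := (hker c d).mp hk
        rcases le_single_one hca with hc | hc <;> rcases le_single_one hdb with hd | hd
        · exact absurd (hc.trans hd.symm) hcd
        · exfalso
          rw [hc, hd, Finsupp.mapDomain_zero, Finsupp.mapDomain_single] at hm
          exact one_ne_zero (Finsupp.single_eq_zero.mp hm.symm)
        · exfalso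
          rw [hc, hd, Finsupp.mapDomain_zero, Finsupp.mapDomain_single] at hm
          exact one_ne_zero (Finsupp.single_eq_zero.mp hm)
        · exact ⟨hc, hd⟩
end

section
/- Let T, S be disjoint subsets of the blocks {B_1,...,B_k} with T ∪ S ≠ ∅. For every simple graph g on [n], the additive SBM sufficient statistics x_i = Σ_{v∈B_i} deg_g(v) satisfy Σ_{B_i∈T} x_i − Σ_{B_i∈S} x_i ≤ 2·C(Σ_{B_i∈T} n_i, 2) + Σ_{B_j ∉ T∪S, B_i∈T} n_i n_j. -/
/-- Additive SBM sufficient statistic: total degree of the nodes in block `i`. -/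
noncomputable def addStat {n k : ℕ} (z : Fin n → Fin k) (g : SimpleGraph (Fin n)) (i : Fin k) : ℕ :=
  ∑ v ∈ Finset.univ.filter (fun v => z v = i), (g.neighborSet v).ncard

open Finset

private lemma two_mul_choose_two (m : ℕ) : 2 * m.choose 2 = m * (m - 1) := by
  induction m with
  | zero => simp
  | succ p ih =>
    rw [Nat.choose_succ_succ, Nat.choose_one_right, Nat.succ_sub_one]
    cases p with
    | zero => simp
    | succ q => rw [Nat.mul_add, ih]; simp [Nat.succ_sub_one]; ring

private lemma blockSize_eq {n k : ℕ} (z : Fin n → Fin k) (i : Fin k) :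
    blockSize z i = (univ.filter (fun v => z v = i)).card := by
  unfold blockSize
  have : {v | z v = i} = ↑(univ.filter (fun v => z v = i)) := by ext v; simp
  rw [this, Set.ncard_coe_finset]

private lemma filter_mem_filter_eq {n k : ℕ} (z : Fin n → Fin k) (t : Finset (Fin k))
    {i : Fin k} (hi : i ∈ t) :
    (univ.filter (fun v => z v ∈ t)).filter (fun v => z v = i)
      = univ.filter (fun v => z v = i) := by
  ext v
  simp only [mem_filter, mem_univ, true_and]
  exact ⟨fun h => h.2, fun h => ⟨h ▸ hi, h⟩⟩

private lemma sum_addStat {n k : ℕ} (z : Fin n → Fin k) (g : SimpleGraph (Fin n))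
    (t : Finset (Fin k)) :
    ∑ i ∈ t, addStat z g i
      = ∑ v ∈ univ.filter (fun v => z v ∈ t), (g.neighborSet v).ncard := by
  rw [← Finset.sum_fiberwise_of_maps_to (g := z) (t := t)
    (fun v hv => (mem_filter.mp hv).2) (fun v => (g.neighborSet v).ncard)]
  exact Finset.sum_congr rfl fun i hi => by
    rw [addStat, filter_mem_filter_eq z t hi]

private lemma sum_blockSize {n k : ℕ} (z : Fin n → Fin k) (t : Finset (Fin k)) :
    ∑ i ∈ t, blockSize z i = (univ.filter (fun v => z v ∈ t)).card := by
  rw [Finset.card_eq_sum_card_fiberwise (f := z) (s := univ.filter (fun v => z v ∈ t)) (t := t) (fun v hv => (mem_filter.mp hv).2)]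
  exact Finset.sum_congr rfl fun i hi => by
    rw [blockSize_eq, filter_mem_filter_eq z t hi]

theorem stmt5 {n k : ℕ} (z : Fin n → Fin k) (hz : ∀ i, 0 < blockSize z i)
    (T S : Finset (Fin k)) (hdisj : Disjoint T S) (hne : (T ∪ S).Nonempty)
    (g : SimpleGraph (Fin n)) :
    (∑ i ∈ T, (addStat z g i : ℤ)) - ∑ i ∈ S, (addStat z g i : ℤ) ≤
      2 * ((∑ i ∈ T, blockSize z i).choose 2 : ℤ) +
        ∑ i ∈ T, ∑ j ∈ Finset.univ \ (T ∪ S), (blockSize z i * blockSize z j : ℤ) := by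
  classical
  set A := univ.filter (fun v => z v ∈ T) with hA
  set B := univ.filter (fun v => z v ∈ S) with hB
  set R := univ.filter (fun v => z v ∈ Finset.univ \ (T ∪ S)) with hR
  -- degree as a filter cardinality
  have hdeg : ∀ v : Fin n, (g.neighborSet v).ncard
      = (univ.filter (fun w => g.Adj v w)).card := by
    intro v
    have : g.neighborSet v = ↑(univ.filter (fun w => g.Adj v w)) := by
      ext w; simp [SimpleGraph.mem_neighborSet]
    rw [this, Set.ncard_coe_finset]
  set D : Fin n → ℕ := fun v => (univ.filter (fun w => g.Adj v w)).card with hD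
  -- split each degree by which part the neighbor lies in
  have hsplit : ∀ v : Fin n, D v =
      (A.filter (g.Adj v)).card + (B.filter (g.Adj v)).card + (R.filter (g.Adj v)).card := by
    intro v
    have hU : (univ : Finset (Fin n)) = A ∪ B ∪ R := by
      ext w
      simp only [hA, hB, hR, mem_union, mem_filter, mem_univ, true_and, mem_sdiff]
      tauto
    have hAB : Disjoint (A.filter (g.Adj v)) (B.filter (g.Adj v)) := by
      simp only [Finset.disjoint_left, hA, hB, mem_filter, mem_univ, true_and]
      intro w hw hw'
      exact (Finset.disjoint_left.mp hdisj hw.1) hw'.1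
    have hABR : Disjoint ((A ∪ B).filter (g.Adj v)) (R.filter (g.Adj v)) := by
      simp only [Finset.disjoint_left, hA, hB, hR, mem_filter, mem_univ, true_and,
        mem_union, mem_sdiff]
      tauto
    have : D v = (univ.filter (g.Adj v)).card := rfl
    rw [this, hU, Finset.filter_union, Finset.card_union_of_disjoint hABR,
      Finset.filter_union, Finset.card_union_of_disjoint hAB]
  -- bound part (i): neighbors within A
  have h1 : ∑ v ∈ A, (A.filter (g.Adj v)).card ≤ A.card * (A.card - 1) := by
    calc ∑ v ∈ A, (A.filter (g.Adj v)).card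
        ≤ ∑ _v ∈ A, (A.card - 1) := by
          refine Finset.sum_le_sum fun v hv => ?_
          have hsub : A.filter (g.Adj v) ⊆ A.erase v := by
            intro w hw
            rw [mem_filter] at hw
            exact Finset.mem_erase.mpr ⟨hw.2.ne', hw.1⟩
          calc (A.filter (g.Adj v)).card ≤ (A.erase v).card := Finset.card_le_card hsub
            _ = A.card - 1 := Finset.card_erase_of_mem hv
      _ = A.card * (A.card - 1) := by rw [Finset.sum_const, smul_eq_mul]
  -- bound part (ii): neighbors within B
  have h2 : ∑ v ∈ A, (B.filter (g.Adj v)).card ≤ ∑ w ∈ B, D w := by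
    have heq : ∑ v ∈ A, (B.filter (g.Adj v)).card
        = ∑ w ∈ B, (A.filter (fun v => g.Adj w v)).card := by
      simp only [Finset.card_filter]
      rw [Finset.sum_comm]
      refine Finset.sum_congr rfl fun w _ => Finset.sum_congr rfl fun v _ => by
        rw [g.adj_comm]
    rw [heq]
    refine Finset.sum_le_sum fun w _ => ?_
    exact Finset.card_le_card (Finset.filter_subset_filter _ (Finset.subset_univ A))
  -- bound part (iii): neighbors in R
  have h3 : ∑ v ∈ A, (R.filter (g.Adj v)).card ≤ A.card * R.card := by
    calc ∑ v ∈ A, (R.filter (g.Adj v)).card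
        ≤ ∑ _v ∈ A, R.card := Finset.sum_le_sum fun v _ => Finset.card_filter_le _ _
      _ = A.card * R.card := by rw [Finset.sum_const, smul_eq_mul]
  -- combine into the key natural-number inequality
  have key : ∑ v ∈ A, D v
      ≤ A.card * (A.card - 1) + (∑ w ∈ B, D w) + A.card * R.card := by
    calc ∑ v ∈ A, D v
        = ∑ v ∈ A, ((A.filter (g.Adj v)).card + (B.filter (g.Adj v)).card
            + (R.filter (g.Adj v)).card) := Finset.sum_congr rfl fun v _ => hsplit v
      _ = (∑ v ∈ A, (A.filter (g.Adj v)).card) + (∑ v ∈ A, (B.filter (g.Adj v)).card)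
            + ∑ v ∈ A, (R.filter (g.Adj v)).card := by rw [Finset.sum_add_distrib,
              Finset.sum_add_distrib]
      _ ≤ _ := by gcongr
  -- rewrite the statistics
  have hST : ∑ i ∈ T, addStat z g i = ∑ v ∈ A, D v := by
    rw [sum_addStat z g T]
    exact Finset.sum_congr rfl fun v _ => hdeg v
  have hSS : ∑ i ∈ S, addStat z g i = ∑ v ∈ B, D v := by
    rw [sum_addStat z g S]
    exact Finset.sum_congr rfl fun v _ => hdeg v
  have hnT : ∑ i ∈ T, blockSize z i = A.card := sum_blockSize z T
  have hnR : ∑ j ∈ Finset.univ \ (T ∪ S), blockSize z j = R.card := sum_blockSize z _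
  have hfin : ∑ i ∈ T, addStat z g i
      ≤ 2 * (∑ i ∈ T, blockSize z i).choose 2 + (∑ i ∈ S, addStat z g i)
        + (∑ i ∈ T, blockSize z i) * (∑ j ∈ Finset.univ \ (T ∪ S), blockSize z j) := by
    rw [hST, hSS, two_mul_choose_two, hnT, hnR]
    exact key
  have hprod : ∑ i ∈ T, ∑ j ∈ Finset.univ \ (T ∪ S), ((blockSize z i : ℤ) * blockSize z j)
      = ((∑ i ∈ T, blockSize z i : ℕ) : ℤ) * ((∑ j ∈ Finset.univ \ (T ∪ S), blockSize z j : ℕ) : ℤ) := by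
    rw [← Finset.sum_mul_sum]
    push_cast
    rfl
  rw [hprod]
  zify at hfin
  push_cast at hfin ⊢
  linarith
end

section
/- The additive SBM model polytope, the convex hull of {(Σ_{v∈B_1} deg_g(v),...,Σ_{v∈B_k} deg_g(v)) : g a simple graph on [n]}, equals the intersection of the half-spaces Σ_{B_i∈T} x_i − Σ_{B_i∈S} x_i ≤ 2·C(Σ_{B_i∈T} n_i, 2) + Σ_{B_j∉T∪S, B_i∈T} n_i n_j, over all pairs of disjoint subsets T, S of the blocks with T ∪ S ≠ ∅. -/
namespace SBM7
open Finset
open scoped Classical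

variable {n k : ℕ}

noncomputable def pp (t : ℝ) : ℝ := max t 0
noncomputable def sg (s : ℝ) : ℝ := if 0 < s then 1 else if s < 0 then -1 else 0
noncomputable def bsz (z : Fin n → Fin k) (i : Fin k) : ℕ :=
  (Finset.univ.filter fun v => z v = i).card
noncomputable def Phi (z : Fin n → Fin k) (c : Fin k → ℝ) : ℝ :=
  ∑ u, ∑ v ∈ ({u}ᶜ : Finset (Fin n)), pp (c (z u) + c (z v))
def chi (T S : Finset (Fin k)) (i : Fin k) : ℝ := if i ∈ T then 1 else if i ∈ S then -1 else 0
def tT (T : Finset (Fin k)) (i : Fin k) : ℝ := if i ∈ T then 1 else 0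
def tR (T S : Finset (Fin k)) (i : Fin k) : ℝ := if i ∈ T ∪ S then 0 else 1

lemma pp_of_nonneg {t : ℝ} (h : 0 ≤ t) : pp t = t := max_eq_left h
lemma pp_of_nonpos {t : ℝ} (h : t ≤ 0) : pp t = 0 := max_eq_right h

lemma blockSize_eq (z : Fin n → Fin k) (i : Fin k) : blockSize z i = bsz z i := by
  simp [blockSize, bsz, Set.ncard_eq_toFinset_card', Set.toFinset_setOf]

lemma sum_compl_singleton (f : Fin n → ℝ) (u : Fin n) :
    ∑ v ∈ ({u}ᶜ : Finset (Fin n)), f v = (∑ v, f v) - f u := by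
  have := Finset.sum_compl_add_sum ({u} : Finset (Fin n)) f
  simp at this; linarith

lemma sum_fiber (z : Fin n → Fin k) (G : Fin k → ℝ) :
    ∑ v, G (z v) = ∑ i, (bsz z i : ℝ) * G i := by
  rw [← Finset.sum_fiberwise Finset.univ z (fun v => G (z v))]
  refine Finset.sum_congr rfl fun i _ => ?_
  rw [Finset.sum_congr rfl (fun v hv => ?_), Finset.sum_const, nsmul_eq_mul]
  · rfl
  · simp only [Finset.mem_filter] at hv; rw [hv.2]

lemma pair_sum (z : Fin n → Fin k) (F : Fin k → Fin k → ℝ) :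
    ∑ u, ∑ v ∈ ({u}ᶜ : Finset (Fin n)), F (z u) (z v)
      = (∑ i, ∑ j, ((bsz z i : ℝ) * (bsz z j : ℝ)) * F i j) - ∑ i, (bsz z i : ℝ) * F i i := by
  have h1 : ∀ u, ∑ v ∈ ({u}ᶜ : Finset (Fin n)), F (z u) (z v)
      = (∑ v, F (z u) (z v)) - F (z u) (z u) := fun u => sum_compl_singleton _ u
  rw [Finset.sum_congr rfl fun u _ => h1 u, Finset.sum_sub_distrib]
  congr 1
  · rw [sum_fiber z (fun i => ∑ v, F i (z v))]
    refine Finset.sum_congr rfl fun i _ => ?_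
    rw [sum_fiber z (fun j => F i j), Finset.mul_sum]
    exact Finset.sum_congr rfl fun j _ => by ring
  · exact sum_fiber z (fun i => F i i)

lemma pp_chi_eq {T S : Finset (Fin k)} (hTS : Disjoint T S) (i j : Fin k) :
    pp (chi T S i + chi T S j)
      = 2 * tT T i * tT T j + tT T i * tR T S j + tR T S i * tT T j := by
  have hd := Finset.disjoint_left.1 hTS
  by_cases hi1 : i ∈ T <;> by_cases hi2 : i ∈ S <;>
    by_cases hj1 : j ∈ T <;> by_cases hj2 : j ∈ S <;>
    first
      | exact absurd hi2 (hd hi1)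
      | exact absurd hj2 (hd hj1)
      | simp [pp, chi, tT, tR, hi1, hi2, hj1, hj2, max_eq_left, max_eq_right] <;> norm_num

lemma pp_chi_diag {T S : Finset (Fin k)} (hTS : Disjoint T S) (i : Fin k) :
    pp (chi T S i + chi T S i) = 2 * tT T i := by
  have hd := Finset.disjoint_left.1 hTS
  by_cases hi1 : i ∈ T <;> by_cases hi2 : i ∈ S <;>
    first
      | exact absurd hi2 (hd hi1)
      | simp [pp, chi, tT, hi1, hi2] <;> norm_num

lemma eT (z : Fin n → Fin k) (T : Finset (Fin k)) :
    ∑ i, (bsz z i : ℝ) * tT T i = ∑ i ∈ T, (bsz z i : ℝ) := by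
  simp [tT, mul_ite, Finset.sum_ite_mem]

lemma eR (z : Fin n → Fin k) (T S : Finset (Fin k)) :
    ∑ i, (bsz z i : ℝ) * tR T S i = ∑ i ∈ univ \ (T ∪ S), (bsz z i : ℝ) := by
  have h : ∀ i, (bsz z i : ℝ) * tR T S i
      = (bsz z i : ℝ) - (if i ∈ T ∪ S then (bsz z i : ℝ) else 0) := by
    intro i; by_cases hi : i ∈ T ∪ S <;> simp [tR, hi]
  rw [Finset.sum_congr rfl fun i _ => h i, Finset.sum_sub_distrib,
    Finset.sum_ite_mem, Finset.univ_inter,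
    Finset.sum_sdiff_eq_sub (Finset.subset_univ _)]

lemma Phi_chi (z : Fin n → Fin k) {T S : Finset (Fin k)} (hTS : Disjoint T S) :
    Phi z (chi T S)
      = 2 * (∑ i ∈ T, (bsz z i : ℝ)) * (∑ i ∈ T, (bsz z i : ℝ))
        + 2 * (∑ i ∈ T, (bsz z i : ℝ)) * (∑ i ∈ univ \ (T ∪ S), (bsz z i : ℝ))
        - 2 * (∑ i ∈ T, (bsz z i : ℝ)) := by
  rw [Phi, pair_sum z (fun i j => pp (chi T S i + chi T S j))]
  have hpt : ∀ i j : Fin k, ((bsz z i : ℝ) * (bsz z j : ℝ)) * pp (chi T S i + chi T S j)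
      = 2 * (((bsz z i : ℝ) * tT T i) * ((bsz z j : ℝ) * tT T j))
        + ((bsz z i : ℝ) * tT T i) * ((bsz z j : ℝ) * tR T S j)
        + ((bsz z i : ℝ) * tR T S i) * ((bsz z j : ℝ) * tT T j) := by
    intro i j; rw [pp_chi_eq hTS i j]; ring
  have hdg : ∀ i : Fin k, (bsz z i : ℝ) * pp (chi T S i + chi T S i)
      = 2 * ((bsz z i : ℝ) * tT T i) := by
    intro i; rw [pp_chi_diag hTS i]; ring
  rw [Finset.sum_congr rfl fun i _ => Finset.sum_congr rfl fun j _ => hpt i j,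
    Finset.sum_congr rfl fun i _ => hdg i]
  simp only [Finset.sum_add_distrib, ← Finset.mul_sum, ← Finset.sum_mul, ← Finset.sum_mul_sum]
  rw [eT, eR]
  ring

lemma two_rhs (z : Fin n → Fin k) {T S : Finset (Fin k)} (hTS : Disjoint T S) :
    2 * (2 * (((∑ i ∈ T, blockSize z i).choose 2 : ℕ) : ℝ)
        + ∑ i ∈ T, ∑ j ∈ univ \ (T ∪ S), ((blockSize z i * blockSize z j : ℕ) : ℝ))
      = Phi z (chi T S) := by
  rw [Phi_chi z hTS]
  have hb : ∀ i, blockSize z i = bsz z i := blockSize_eq z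
  set N : ℕ := ∑ i ∈ T, bsz z i with hN
  have hbsum : ∑ i ∈ T, blockSize z i = N := Finset.sum_congr rfl fun i _ => hb i
  have hMT : (∑ i ∈ T, (bsz z i : ℝ)) = (N : ℝ) := by rw [hN]; push_cast; rfl
  have hC : 2 * ((N.choose 2 : ℕ) : ℝ) = (N : ℝ) * (N : ℝ) - (N : ℝ) := by
    rcases Nat.eq_zero_or_pos N with h | h
    · simp [h]
    · have h2 : 2 * N.choose 2 = N * (N - 1) := by
        rw [Nat.choose_two_right, Nat.mul_div_cancel']
        rcases Nat.even_or_odd N with he | ho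
        · exact Dvd.dvd.mul_right he.two_dvd _
        · exact Dvd.dvd.mul_left (Nat.Odd.sub_odd ho odd_one).two_dvd _
      have := congrArg (fun m : ℕ => (m : ℝ)) h2
      push_cast [Nat.cast_sub h] at this
      push_cast
      linarith
  have hprod : (∑ i ∈ T, ∑ j ∈ univ \ (T ∪ S), ((blockSize z i * blockSize z j : ℕ) : ℝ))
      = (∑ i ∈ T, (bsz z i : ℝ)) * (∑ j ∈ univ \ (T ∪ S), (bsz z j : ℝ)) := by
    rw [Finset.sum_mul_sum]
    refine Finset.sum_congr rfl fun i _ => Finset.sum_congr rfl fun j _ => ?_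
    rw [hb i, hb j]; push_cast; ring
  rw [hprod, hbsum, hMT]
  nlinarith [hC]

lemma chi_dot {T S : Finset (Fin k)} (hTS : Disjoint T S) (y : Fin k → ℝ) :
    ∑ i, chi T S i * y i = (∑ i ∈ T, y i) - ∑ i ∈ S, y i := by
  have hd := Finset.disjoint_left.1 hTS
  have h : ∀ i, chi T S i * y i
      = (if i ∈ T then y i else 0) - (if i ∈ S then y i else 0) := by
    intro i; by_cases h1 : i ∈ T <;> by_cases h2 : i ∈ S <;>
      first | exact absurd h2 (hd h1) | simp [chi, h1, h2]
  rw [Finset.sum_congr rfl fun i _ => h i, Finset.sum_sub_distrib, Finset.sum_ite_mem,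
    Finset.sum_ite_mem, Finset.univ_inter, Finset.univ_inter]

lemma sg_cases (a s : ℝ) (hs : s = 0 ∨ a ≤ |s|) :
    (sg s = 1 ∧ a ≤ s) ∨ (sg s = -1 ∧ s ≤ -a) ∨ (sg s = 0 ∧ s = 0) := by
  rcases hs with h | h
  · right; right; simp [sg, h]
  · rcases lt_trichotomy 0 s with h1 | h1 | h1
    · left; exact ⟨by simp [sg, h1], by rwa [abs_of_pos h1] at h⟩
    · right; right; simp [sg, ← h1]
    · right; left
      refine ⟨by simp [sg, h1, not_lt.2 h1.le, asymm h1], ?_⟩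
      rw [abs_of_neg h1] at h; linarith

lemma scalar (a s t : ℝ) (ha : 0 < a) (hs : s = 0 ∨ a ≤ |s|) (ht : t = 0 ∨ a ≤ |t|) :
    a * pp (sg s + sg t) + pp ((s - a * sg s) + (t - a * sg t)) = pp (s + t) := by
  rcases sg_cases a s hs with ⟨e1, b1⟩ | ⟨e1, b1⟩ | ⟨e1, b1⟩ <;>
    rcases sg_cases a t ht with ⟨e2, b2⟩ | ⟨e2, b2⟩ | ⟨e2, b2⟩ <;> rw [e1, e2]
  · rw [pp_of_nonneg (by norm_num), pp_of_nonneg (by linarith : (0:ℝ) ≤ s - a * 1 + (t - a * 1)),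
      pp_of_nonneg (by linarith)]
    ring
  · rw [show (1:ℝ) + -1 = 0 by norm_num, pp_of_nonpos le_rfl,
      show s - a * 1 + (t - a * -1) = s + t by ring]
    ring
  · subst b2
    rw [pp_of_nonneg (by norm_num), pp_of_nonneg (by linarith : (0:ℝ) ≤ s - a * 1 + (0 - a * 0)),
      pp_of_nonneg (by linarith)]
    ring
  · rw [show (-1:ℝ) + 1 = 0 by norm_num, pp_of_nonpos le_rfl,
      show s - a * -1 + (t - a * 1) = s + t by ring]
    ring
  · rw [pp_of_nonpos (by norm_num), pp_of_nonpos (by linarith : s - a * -1 + (t - a * -1) ≤ 0),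
      pp_of_nonpos (by linarith)]
    ring
  · subst b2
    rw [pp_of_nonpos (by norm_num), pp_of_nonpos (by linarith : s - a * -1 + (0 - a * 0) ≤ 0),
      pp_of_nonpos (by linarith)]
    ring
  · subst b1
    rw [pp_of_nonneg (by norm_num), pp_of_nonneg (by linarith : (0:ℝ) ≤ 0 - a * 0 + (t - a * 1)),
      pp_of_nonneg (by linarith)]
    ring
  · subst b1
    rw [pp_of_nonpos (by norm_num), pp_of_nonpos (by linarith : 0 - a * 0 + (t - a * -1) ≤ 0),
      pp_of_nonpos (by linarith)]
    ring
  · subst b1; subst b2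
    rw [show (0:ℝ) + 0 = 0 by norm_num, pp_of_nonpos le_rfl,
      show (0:ℝ) - a * 0 + (0 - a * 0) = 0 by ring, pp_of_nonpos le_rfl]
    ring

lemma ncard_nbr (g : SimpleGraph (Fin n)) (v : Fin n) :
    ((g.neighborSet v).ncard : ℝ) = ∑ u, (if g.Adj v u then (1:ℝ) else 0) := by
  rw [Set.ncard_eq_toFinset_card']
  have h : (g.neighborSet v).toFinset = univ.filter (fun u => g.Adj v u) := by
    ext u; simp
  rw [h, Finset.sum_boole]

lemma gen_sum (z : Fin n → Fin k) (g : SimpleGraph (Fin n)) (c : Fin k → ℝ) :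
    2 * (∑ i, c i * (addStat z g i : ℝ))
      = ∑ u, ∑ v ∈ ({u}ᶜ : Finset (Fin n)), (if g.Adj u v then c (z u) + c (z v) else 0) := by
  have h0 : ∑ i, c i * (addStat z g i : ℝ)
      = ∑ v, c (z v) * ((g.neighborSet v).ncard : ℝ) := by
    rw [← Finset.sum_fiberwise Finset.univ z (fun v => c (z v) * ((g.neighborSet v).ncard : ℝ))]
    refine Finset.sum_congr rfl fun i _ => ?_
    rw [addStat, Nat.cast_sum, Finset.mul_sum]
    refine Finset.sum_congr rfl fun v hv => ?_
    simp only [Finset.mem_filter] at hv; rw [hv.2]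
  have h1 : ∀ v, c (z v) * ((g.neighborSet v).ncard : ℝ)
      = ∑ u, (if g.Adj v u then c (z v) else 0) := by
    intro v; rw [ncard_nbr, Finset.mul_sum]
    exact Finset.sum_congr rfl fun u _ => by rw [mul_ite, mul_one, mul_zero]
  have h2 : ∑ v, ∑ u, (if g.Adj v u then c (z v) else 0)
      = ∑ u, ∑ v, (if g.Adj u v then c (z v) else 0) := by
    rw [Finset.sum_comm]
    refine Finset.sum_congr rfl fun u _ => Finset.sum_congr rfl fun v _ => ?_
    congr 1
    simp [SimpleGraph.adj_comm]
  have h3 : ∀ u, ∑ v ∈ ({u}ᶜ : Finset (Fin n)), (if g.Adj u v then c (z u) + c (z v) else 0)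
      = ∑ v, (if g.Adj u v then c (z u) + c (z v) else 0) := by
    intro u
    have := Finset.sum_compl_add_sum ({u} : Finset (Fin n))
      (fun v => if g.Adj u v then c (z u) + c (z v) else 0)
    simp [g.irrefl] at this
    exact this.symm ▸ by linarith [this]
  rw [h0, Finset.sum_congr rfl fun v _ => h1 v, two_mul,
    Finset.sum_congr rfl fun u _ => h3 u]
  nth_rewrite 2 [h2]
  rw [← Finset.sum_add_distrib]
  refine Finset.sum_congr rfl fun u _ => ?_
  rw [← Finset.sum_add_distrib]
  refine Finset.sum_congr rfl fun v _ => ?_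
  by_cases h : g.Adj u v <;> simp [h]

lemma gen_le (z : Fin n → Fin k) (g : SimpleGraph (Fin n)) (c : Fin k → ℝ) :
    2 * (∑ i, c i * (addStat z g i : ℝ)) ≤ Phi z c := by
  rw [gen_sum]
  refine Finset.sum_le_sum fun u _ => Finset.sum_le_sum fun v _ => ?_
  by_cases h : g.Adj u v
  · rw [if_pos h]; exact le_max_left _ _
  · rw [if_neg h]; exact le_max_right _ _

lemma gen_opt (z : Fin n → Fin k) (c : Fin k → ℝ) :
    ∃ g : SimpleGraph (Fin n), 2 * (∑ i, c i * (addStat z g i : ℝ)) = Phi z c := by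
  refine ⟨SimpleGraph.fromRel (fun u v => 0 < c (z u) + c (z v)), ?_⟩
  rw [gen_sum, Phi]
  refine Finset.sum_congr rfl fun u _ => Finset.sum_congr rfl fun v hv => ?_
  have hvu : v ≠ u := by simpa using hv
  by_cases h : 0 < c (z u) + c (z v)
  · rw [if_pos ⟨hvu.symm, Or.inl h⟩, pp_of_nonneg h.le]
  · rw [if_neg, pp_of_nonpos (not_lt.1 h)]
    rintro ⟨-, hor | hor⟩
    · exact h hor
    · rw [add_comm] at hor; exact h hor

lemma key (z : Fin n → Fin k) (x : Fin k → ℝ)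
    (hx : ∀ T S : Finset (Fin k), Disjoint T S → (T ∪ S).Nonempty →
      (∑ i ∈ T, x i) - ∑ i ∈ S, x i ≤
        2 * ((∑ i ∈ T, blockSize z i).choose 2 : ℕ) +
          ∑ i ∈ T, ∑ j ∈ Finset.univ \ (T ∪ S), ((blockSize z i * blockSize z j : ℕ) : ℝ)) :
    ∀ (N : ℕ) (c : Fin k → ℝ), (univ.filter fun i => c i ≠ 0).card ≤ N →
      2 * (∑ i, c i * x i) ≤ Phi z c := by
  intro N
  induction N with
  | zero =>
    intro c hc
    have hc0 : ∀ i, c i = 0 := by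
      intro i
      by_contra h
      have hmem : i ∈ univ.filter (fun i => c i ≠ 0) := by simp [h]
      have := Finset.card_pos.2 ⟨i, hmem⟩
      omega
    have h1 : ∑ i, c i * x i = 0 := by simp [hc0]
    rw [h1]
    simp only [Phi, hc0, add_zero, mul_zero]
    have : pp 0 = 0 := pp_of_nonpos le_rfl
    simp [this]
  | succ N ih =>
    intro c hc
    by_cases hall : ∀ i, c i = 0
    · have h1 : ∑ i, c i * x i = 0 := by simp [hall]
      rw [h1]
      simp only [Phi, hall, add_zero, mul_zero]
      have : pp 0 = 0 := pp_of_nonpos le_rfl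
      simp [this]
    · push_neg at hall
      obtain ⟨iw, hiw⟩ := hall
      have hsne : (univ.filter fun i => c i ≠ 0).Nonempty := ⟨iw, by simp [hiw]⟩
      set supp := univ.filter fun i => c i ≠ 0 with hsupp
      set a := supp.inf' hsne (fun i => |c i|) with ha_def
      have ha : 0 < a := by
        rw [ha_def, Finset.lt_inf'_iff]
        intro i hi
        rw [hsupp, Finset.mem_filter] at hi
        exact abs_pos.2 hi.2
      have hbd : ∀ i, c i = 0 ∨ a ≤ |c i| := by
        intro i
        by_cases h : c i = 0
        · exact Or.inl h
        · exact Or.inr (Finset.inf'_le _ (by rw [hsupp]; simp [h]))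
      obtain ⟨i₀, hi₀, hmin⟩ := Finset.exists_mem_eq_inf' hsne (fun i => |c i|)
      rw [← ha_def] at hmin
      set T := univ.filter fun i => 0 < c i with hT
      set S := univ.filter fun i => c i < 0 with hS
      have hdisj : Disjoint T S := by
        rw [Finset.disjoint_left]
        intro i h1 h2
        rw [hT, Finset.mem_filter] at h1
        rw [hS, Finset.mem_filter] at h2
        linarith [h1.2, h2.2]
      have hne : (T ∪ S).Nonempty := by
        refine ⟨iw, Finset.mem_union.2 ?_⟩
        rcases lt_or_gt_of_ne hiw with h | h
        · right; rw [hS, Finset.mem_filter]; exact ⟨Finset.mem_univ _, h⟩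
        · left; rw [hT, Finset.mem_filter]; exact ⟨Finset.mem_univ _, h⟩
      have hchi : ∀ i, sg (c i) = chi T S i := by
        intro i
        rcases lt_trichotomy 0 (c i) with h | h | h
        · have h1 : i ∈ T := by rw [hT, Finset.mem_filter]; exact ⟨Finset.mem_univ _, h⟩
          simp [sg, chi, h, h1]
        · have h1 : i ∉ T := by rw [hT, Finset.mem_filter]; simp [← h]
          have h2 : i ∉ S := by rw [hS, Finset.mem_filter]; simp [← h]
          simp [sg, chi, ← h, h1, h2]
        · have h1 : i ∉ T := by rw [hT, Finset.mem_filter]; simp [not_lt.2 h.le]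
          have h2 : i ∈ S := by rw [hS, Finset.mem_filter]; exact ⟨Finset.mem_univ _, h⟩
          simp [sg, chi, h, asymm h, h1, h2]
      set c' : Fin k → ℝ := fun i => c i - a * sg (c i) with hc'
      have hc'i₀ : c' i₀ = 0 := by
        rw [hsupp, Finset.mem_filter] at hi₀
        rcases lt_trichotomy 0 (c i₀) with h | h | h
        · rw [hc']
          simp only [sg, if_pos h]
          rw [hmin, abs_of_pos h]; ring
        · exact absurd h.symm hi₀.2
        · rw [hc']
          simp only [sg, if_neg (asymm h), if_pos h]
          rw [hmin, abs_of_neg h]; ring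
      have hsub : (univ.filter fun i => c' i ≠ 0) ⊆ supp.erase i₀ := by
        intro i hi
        rw [Finset.mem_filter] at hi
        rw [Finset.mem_erase, hsupp, Finset.mem_filter]
        refine ⟨?_, Finset.mem_univ _, ?_⟩
        · rintro rfl; exact hi.2 hc'i₀
        · intro h
          apply hi.2
          rw [hc']; simp [sg, h]
      have hcard : (univ.filter fun i => c' i ≠ 0).card ≤ N := by
        calc (univ.filter fun i => c' i ≠ 0).card ≤ (supp.erase i₀).card :=
              Finset.card_le_card hsub
          _ = supp.card - 1 := Finset.card_erase_of_mem hi₀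
          _ ≤ N := by omega
      have hIH := ih c' hcard
      have hPhi : Phi z c = a * Phi z (chi T S) + Phi z c' := by
        simp only [Phi, Finset.mul_sum, ← Finset.sum_add_distrib]
        refine Finset.sum_congr rfl fun u _ => Finset.sum_congr rfl fun v _ => ?_
        rw [← hchi, ← hchi]
        exact (scalar a (c (z u)) (c (z v)) ha (hbd _) (hbd _)).symm
      have hdot : ∑ i, c i * x i = (∑ i, c' i * x i)
          + a * ((∑ i ∈ T, x i) - ∑ i ∈ S, x i) := by
        rw [← chi_dot hdisj x, Finset.mul_sum, ← Finset.sum_add_distrib]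
        refine Finset.sum_congr rfl fun i _ => ?_
        rw [← hchi, hc']
        ring
      have hineq := hx T S hdisj hne
      have h2rhs := two_rhs z hdisj
      have hmul : a * ((∑ i ∈ T, x i) - ∑ i ∈ S, x i)
          ≤ a * (2 * ((∑ i ∈ T, blockSize z i).choose 2 : ℕ) +
            ∑ i ∈ T, ∑ j ∈ Finset.univ \ (T ∪ S), ((blockSize z i * blockSize z j : ℕ) : ℝ)) :=
        mul_le_mul_of_nonneg_left hineq ha.le
      rw [hdot, hPhi, ← h2rhs]
      nlinarith [hIH, hmul]

end SBM7

theorem stmt7 {n k : ℕ} (z : Fin n → Fin k) (hz : ∀ i, 0 < blockSize z i) :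
    convexHull ℝ
        {x : Fin k → ℝ | ∃ g : SimpleGraph (Fin n), ∀ i, x i = (addStat z g i : ℝ)} =
      {x : Fin k → ℝ | ∀ T S : Finset (Fin k), Disjoint T S → (T ∪ S).Nonempty →
        (∑ i ∈ T, x i) - ∑ i ∈ S, x i ≤
          2 * ((∑ i ∈ T, blockSize z i).choose 2 : ℕ) +
            ∑ i ∈ T, ∑ j ∈ Finset.univ \ (T ∪ S), ((blockSize z i * blockSize z j : ℕ) : ℝ)} := by
  classical
  open Finset SBM7 in
  set Gen : Set (Fin k → ℝ) :=
    {x : Fin k → ℝ | ∃ g : SimpleGraph (Fin n), ∀ i, x i = (addStat z g i : ℝ)} with hGen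
  set Q : Set (Fin k → ℝ) :=
    {x : Fin k → ℝ | ∀ T S : Finset (Fin k), Disjoint T S → (T ∪ S).Nonempty →
      (∑ i ∈ T, x i) - ∑ i ∈ S, x i ≤
        2 * ((∑ i ∈ T, blockSize z i).choose 2 : ℕ) +
          ∑ i ∈ T, ∑ j ∈ Finset.univ \ (T ∪ S), ((blockSize z i * blockSize z j : ℕ) : ℝ)} with hQ
  have hQconv : Convex ℝ Q := by
    intro p hp q hq α β hα hβ hαβ
    intro T S hTS hne
    have h1 := hp T S hTS hne
    have h2 := hq T S hTS hne
    have e : ∀ W : Finset (Fin k),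
        ∑ i ∈ W, (α • p + β • q) i = α * ∑ i ∈ W, p i + β * ∑ i ∈ W, q i := by
      intro W
      simp only [Pi.add_apply, Pi.smul_apply, smul_eq_mul, Finset.sum_add_distrib,
        Finset.mul_sum]
    rw [e, e]
    set E := 2 * (((∑ i ∈ T, blockSize z i).choose 2 : ℕ) : ℝ) +
      ∑ i ∈ T, ∑ j ∈ Finset.univ \ (T ∪ S), ((blockSize z i * blockSize z j : ℕ) : ℝ) with hE
    have hm1 := mul_le_mul_of_nonneg_left h1 hα
    have hm2 := mul_le_mul_of_nonneg_left h2 hβ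
    have : α * E + β * E = E := by rw [← add_mul, hαβ, one_mul]
    nlinarith [hm1, hm2]
  have hGenQ : Gen ⊆ Q := by
    rintro y ⟨g, hg⟩ T S hTS hne
    have e : ∀ W : Finset (Fin k), ∑ i ∈ W, y i = ∑ i ∈ W, (addStat z g i : ℝ) :=
      fun W => Finset.sum_congr rfl fun i _ => hg i
    rw [e, e, ← SBM7.chi_dot hTS (fun i => (addStat z g i : ℝ))]
    have hle := SBM7.gen_le z g (SBM7.chi T S)
    have h2r := SBM7.two_rhs z hTS
    linarith
  apply Set.Subset.antisymm
  · exact convexHull_min hGenQ hQconv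
  · intro x hx
    by_contra hmem
    have hfin : Gen.Finite := by
      have : Gen = Set.range (fun g : SimpleGraph (Fin n) => fun i => (addStat z g i : ℝ)) := by
        ext y
        simp only [hGen, Set.mem_setOf_eq, Set.mem_range, funext_iff]
        constructor
        · rintro ⟨g, h⟩; exact ⟨g, fun i => (h i).symm⟩
        · rintro ⟨g, h⟩; exact ⟨g, fun i => (h i).symm⟩
      rw [this]
      exact Set.finite_range _
    have hconv : Convex ℝ (convexHull ℝ Gen) := convex_convexHull ℝ Gen
    have hclosed : IsClosed (convexHull ℝ Gen) := (hfin.isCompact_convexHull (𝕜 := ℝ)).isClosed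
    obtain ⟨f, u, hfu, hux⟩ := geometric_hahn_banach_closed_point hconv hclosed hmem
    set c : Fin k → ℝ := fun i => f (Pi.single i 1) with hc
    have hf : ∀ y : Fin k → ℝ, f y = ∑ i, c i * y i := by
      intro y
      conv_lhs => rw [pi_eq_sum_univ y]
      rw [map_sum]
      refine Finset.sum_congr rfl fun i _ => ?_
      rw [map_smul, smul_eq_mul]
      have hsing : (fun j => if i = j then (1:ℝ) else 0) = Pi.single i 1 := by
        funext j
        by_cases h : i = j <;> simp [Pi.single_apply, h, eq_comm]
      rw [hsing]
      show y i * c i = c i * y i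
      ring
    have hkey := SBM7.key z x hx _ c le_rfl
    obtain ⟨g, hg⟩ := SBM7.gen_opt z c
    have hy : (fun i => (addStat z g i : ℝ)) ∈ convexHull ℝ Gen :=
      subset_convexHull ℝ Gen ⟨g, fun i => rfl⟩
    have h1 := hfu _ hy
    rw [hf] at h1
    rw [hf] at hux
    linarith
end
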